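/- Integrality of the rounding problem (the linear relaxation attains its optimum at integer points): let F be a finite set of facilities, M ⊆ F × F a movement set with (i,i) ∉ M for all i ∈ F, X^Rel : M → ℝ with X^Rel ≥ 0, and ĉ : M → ℝ any cost vector. For every real-valued X̃ : M → ℝ satisfying the rounding constraints with respect to X^Rel (entrywise bounds ⌊X^Rel_{i,j}⌋ ≤ X̃_{i,j} ≤ ⌈X^Rel_{i,j}⌉, out-sum bounds ⌊Z^S_i⌋ ≤ ∑_{j : (i,j) ∈ M} X̃_{i,j} ≤ ⌈Z^S_i⌉, in-sum bounds ⌊Z^R_i⌋ ≤ ∑_{j : (j,i) ∈ M} X̃_{j,i} ≤ ⌈Z^R_i⌉, and balance bounds ⌊B_i⌋ ≤ ∑_{j : (j,i) ∈ M} X̃_{j,i} − ∑_{j : (i,j) ∈ M} X̃_{i,j} ≤ ⌈B_i⌉), there exists an integer feasible rounding X : M → ℤ of X^Rel with ∑_{(i,j) ∈ M} ĉ_{i,j} X_{i,j} ≤ ∑_{(i,j) ∈ M} ĉ_{i,j} X̃_{i,j}. -/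

import Mathlib

open Finset

noncomputable section

variable {F : Type*} [Fintype F] [DecidableEq F]

/-- Total (relaxed) amount sent by facility `i`. -/
def ZS (M : Finset (F × F)) (XRel : F → F → ℝ) (i : F) : ℝ :=
  ∑ j ∈ univ.filter (fun j => (i, j) ∈ M), XRel i j

/-- Total (relaxed) amount received by facility `i`. -/
def ZR (M : Finset (F × F)) (XRel : F → F → ℝ) (i : F) : ℝ :=
  ∑ j ∈ univ.filter (fun j => (j, i) ∈ M), XRel j i

/-- Net balance (received minus sent) of facility `i`. -/
def Bal (M : Finset (F × F)) (XRel : F → F → ℝ) (i : F) : ℝ :=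
  ZR M XRel i - ZS M XRel i

/-- `X : M → ℤ` is a feasible rounding of the relaxed values `XRel`: entrywise bounds,
out-sum bounds, in-sum bounds, and balance bounds. -/
def FeasibleRounding (M : Finset (F × F)) (XRel : F → F → ℝ) (X : F → F → ℤ) : Prop :=
  (∀ m ∈ M, ⌊XRel m.1 m.2⌋ ≤ X m.1 m.2 ∧ X m.1 m.2 ≤ ⌈XRel m.1 m.2⌉) ∧
  (∀ i : F, ⌊ZS M XRel i⌋ ≤ (∑ j ∈ univ.filter (fun j => (i, j) ∈ M), X i j) ∧
    (∑ j ∈ univ.filter (fun j => (i, j) ∈ M), X i j) ≤ ⌈ZS M XRel i⌉) ∧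
  (∀ i : F, ⌊ZR M XRel i⌋ ≤ (∑ j ∈ univ.filter (fun j => (j, i) ∈ M), X j i) ∧
    (∑ j ∈ univ.filter (fun j => (j, i) ∈ M), X j i) ≤ ⌈ZR M XRel i⌉) ∧
  (∀ i : F, ⌊Bal M XRel i⌋ ≤ (∑ j ∈ univ.filter (fun j => (j, i) ∈ M), X j i)
        - (∑ j ∈ univ.filter (fun j => (i, j) ∈ M), X i j) ∧
    (∑ j ∈ univ.filter (fun j => (j, i) ∈ M), X j i)
        - (∑ j ∈ univ.filter (fun j => (i, j) ∈ M), X i j) ≤ ⌈Bal M XRel i⌉)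

/-- Real-valued feasibility for the rounding constraints with respect to `XRel`. -/
def RealFeasibleRounding (M : Finset (F × F)) (XRel : F → F → ℝ) (Xt : F → F → ℝ) : Prop :=
  (∀ m ∈ M, (⌊XRel m.1 m.2⌋ : ℝ) ≤ Xt m.1 m.2 ∧ Xt m.1 m.2 ≤ (⌈XRel m.1 m.2⌉ : ℝ)) ∧
  (∀ i : F, (⌊ZS M XRel i⌋ : ℝ) ≤ (∑ j ∈ univ.filter (fun j => (i, j) ∈ M), Xt i j) ∧
    (∑ j ∈ univ.filter (fun j => (i, j) ∈ M), Xt i j) ≤ (⌈ZS M XRel i⌉ : ℝ)) ∧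
  (∀ i : F, (⌊ZR M XRel i⌋ : ℝ) ≤ (∑ j ∈ univ.filter (fun j => (j, i) ∈ M), Xt j i) ∧
    (∑ j ∈ univ.filter (fun j => (j, i) ∈ M), Xt j i) ≤ (⌈ZR M XRel i⌉ : ℝ)) ∧
  (∀ i : F, (⌊Bal M XRel i⌋ : ℝ) ≤ (∑ j ∈ univ.filter (fun j => (j, i) ∈ M), Xt j i)
        - (∑ j ∈ univ.filter (fun j => (i, j) ∈ M), Xt i j) ∧
    (∑ j ∈ univ.filter (fun j => (j, i) ∈ M), Xt j i)
        - (∑ j ∈ univ.filter (fun j => (i, j) ∈ M), Xt i j) ≤ (⌈Bal M XRel i⌉ : ℝ))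



/-- A real number is integral. -/
def IsIntR (x : ℝ) : Prop := ∃ n : ℤ, (n : ℝ) = x

lemma IsIntR.add {x y : ℝ} (hx : IsIntR x) (hy : IsIntR y) : IsIntR (x + y) := by
  obtain ⟨n, rfl⟩ := hx; obtain ⟨m, rfl⟩ := hy; exact ⟨n + m, by push_cast; ring⟩

lemma IsIntR.sub {x y : ℝ} (hx : IsIntR x) (hy : IsIntR y) : IsIntR (x - y) := by
  obtain ⟨n, rfl⟩ := hx; obtain ⟨m, rfl⟩ := hy; exact ⟨n - m, by push_cast; ring⟩

lemma IsIntR_sum {α : Type*} (S : Finset α) (f : α → ℝ) (h : ∀ a ∈ S, IsIntR (f a)) :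
    IsIntR (∑ a ∈ S, f a) := by
  classical
  induction S using Finset.induction_on with
  | empty => exact ⟨0, by simp⟩
  | insert _ _ hnot ih =>
    rename_i a s
    rw [Finset.sum_insert hnot]
    exact (h a (Finset.mem_insert_self a s)).add
      (ih fun b hb => h b (Finset.mem_insert_of_mem hb))

lemma IsIntR.floor_lt {x : ℝ} (h : ¬ IsIntR x) : (⌊x⌋ : ℝ) < x :=
  lt_of_le_of_ne (Int.floor_le x) (fun he => h ⟨⌊x⌋, he⟩)

lemma IsIntR.lt_ceil {x : ℝ} (h : ¬ IsIntR x) : x < (⌈x⌉ : ℝ) :=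
  lt_of_le_of_ne (Int.le_ceil x) (fun he => h ⟨⌈x⌉, he.symm⟩)

lemma IsIntR.ceil_eq {x : ℝ} (h : ¬ IsIntR x) : ⌈x⌉ = ⌊x⌋ + 1 := by
  have h1 : (⌊x⌋ : ℝ) < x := IsIntR.floor_lt h
  have h2 : x < (⌊x⌋ : ℝ) + 1 := Int.lt_floor_add_one x
  have hle : ⌈x⌉ ≤ ⌊x⌋ + 1 := Int.ceil_le.mpr (by push_cast; linarith)
  have hge : ⌊x⌋ + 1 ≤ ⌈x⌉ := by
    have := IsIntR.lt_ceil h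
    have : (⌊x⌋ : ℝ) < (⌈x⌉ : ℝ) := lt_trans h1 this
    exact_mod_cast Int.add_one_le_iff.mpr (by exact_mod_cast this)
  omega

/-- In a finset whose sum is integral, a fractional term has a fractional partner. -/
lemma frac_partner {α : Type*} [DecidableEq α] {S : Finset α} {f : α → ℝ}
    (hS : IsIntR (∑ a ∈ S, f a)) {e : α} (he : e ∈ S) (hf : ¬ IsIntR (f e)) :
    ∃ e' ∈ S, e' ≠ e ∧ ¬ IsIntR (f e') := by
  by_contra hcon
  push_neg at hcon
  have hrest : IsIntR (∑ a ∈ S.erase e, f a) := by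
    refine IsIntR_sum _ _ fun a ha => ?_
    exact hcon a (Finset.mem_of_mem_erase ha) (Finset.ne_of_mem_erase ha)
  have hsum : (∑ a ∈ S, f a) = f e + ∑ a ∈ S.erase e, f a := (Finset.add_sum_erase S f he).symm
  have : IsIntR (f e) := by
    have := hS.sub hrest
    rw [hsum] at this
    simpa using this

  exact hf this

/-- A fractional finite sum has a fractional term. -/
lemma frac_term {α : Type*} {S : Finset α} {f : α → ℝ}
    (hS : ¬ IsIntR (∑ a ∈ S, f a)) : ∃ a ∈ S, ¬ IsIntR (f a) := by
  by_contra hcon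
  push_neg at hcon
  exact hS (IsIntR_sum _ _ hcon)

end

noncomputable section

/-- Key combinatorial lemma: in a finite "port digraph" (edges `e ∈ Ed` with optional tail
port `t e` and head port `h e`; `none` = free end), if every port incident to an edge is
incident to at least two edges, then there is a nonzero integer circulation supported on `Ed`. -/
lemma exists_circulation {E V : Type*} [Fintype V] [DecidableEq E] [DecidableEq V]
    (Ed : Finset E) (t h : E → Option V)
    (hdeg : ∀ v : V, ∀ e ∈ Ed, (t e = some v ∨ h e = some v) →
      ∃ e' ∈ Ed, e' ≠ e ∧ (t e' = some v ∨ h e' = some v))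
    (hne : Ed.Nonempty) :
    ∃ d : E → ℤ, (∀ e, d e ≠ 0 → e ∈ Ed) ∧ (∃ e, d e ≠ 0) ∧
      (∀ v : V, ∑ e ∈ Ed.filter (fun e => h e = some v), d e
              = ∑ e ∈ Ed.filter (fun e => t e = some v), d e) := by
  classical
  -- darts
  let dep : E × Bool → Option V := fun d => if d.2 then t d.1 else h d.1
  let arr : E × Bool → Option V := fun d => if d.2 then h d.1 else t d.1
  -- choice of start dart
  have hstart : ∃ s : E × Bool, s.1 ∈ Ed ∧
      (dep s = none ∨ ∀ e ∈ Ed, t e ≠ none ∧ h e ≠ none) := by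
    by_cases hfe : ∃ e ∈ Ed, t e = none ∨ h e = none
    · obtain ⟨e, he, hor⟩ := hfe
      rcases hor with h1 | h2
      · exact ⟨(e, true), he, Or.inl (by simp [dep, h1])⟩
      · exact ⟨(e, false), he, Or.inl (by simp [dep, h2])⟩
    · push_neg at hfe
      obtain ⟨e, he⟩ := hne
      exact ⟨(e, true), he, Or.inr fun e' he' => ⟨(hfe e' he').1, (hfe e' he').2⟩⟩
  obtain ⟨s, hs_mem, hs_safe⟩ := hstart
  -- extension of a dart arriving at a genuine port
  have hext : ∀ d : E × Bool, d.1 ∈ Ed → arr d ≠ none →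
      ∃ d' : E × Bool, d'.1 ∈ Ed ∧ d'.1 ≠ d.1 ∧ dep d' = arr d := by
    intro d hd hno
    obtain ⟨v, hv⟩ := Option.ne_none_iff_exists'.mp hno
    have hinc : t d.1 = some v ∨ h d.1 = some v := by
      rcases d with ⟨e, b⟩
      cases b
      · exact Or.inl (by simpa [arr] using hv)
      · exact Or.inr (by simpa [arr] using hv)
    obtain ⟨e', he', hne', hor⟩ := hdeg v d.1 hd hinc
    rcases hor with h1 | h2
    · exact ⟨(e', true), he', by simpa using hne', by simp [dep, h1, hv]⟩
    · exact ⟨(e', false), he', by simpa using hne', by simp [dep, h2, hv]⟩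
  -- the walk
  let step : E × Bool → E × Bool := fun d =>
    if hc : d.1 ∈ Ed ∧ arr d ≠ none then Classical.choose (hext d hc.1 hc.2) else s
  let g : ℕ → E × Bool := fun n => step^[n] s
  have hg0 : g 0 = s := rfl
  have hgsucc : ∀ n, g (n + 1) = step (g n) := by
    intro n
    show step^[n + 1] s = step (step^[n] s)
    rw [Function.iterate_succ_apply']
  -- invariants
  have inv1 : ∀ n, (g n).1 ∈ Ed := by
    intro n
    induction n with
    | zero => exact hs_mem
    | succ n ih =>
      rw [hgsucc]
      by_cases hc : (g n).1 ∈ Ed ∧ arr (g n) ≠ none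
      · have := Classical.choose_spec (hext (g n) hc.1 hc.2)
        simp only [step, dif_pos hc]
        exact this.1
      · simp only [step, dif_neg hc]; exact hs_mem
  have inv_none : ∀ n, arr (g n) = none → g (n + 1) = s := by
    intro n hn
    rw [hgsucc]
    have : ¬ ((g n).1 ∈ Ed ∧ arr (g n) ≠ none) := by
      intro hc; exact hc.2 hn
    simp only [step, dif_neg this]
  have inv2 : ∀ n, dep (g (n + 1)) = arr (g n) := by
    intro n
    by_cases hn : arr (g n) = none
    · rw [inv_none n hn, hn]
      rcases hs_safe with h1 | h2
      · exact h1
      · exfalso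
        have he := inv1 n
        have hth := h2 (g n).1 he
        rcases hgn : (g n) with ⟨e, bb⟩
        rw [hgn] at hn hth
        cases bb
        · exact hth.1 (by simpa [arr] using hn)
        · exact hth.2 (by simpa [arr] using hn)
    · rw [hgsucc]
      have hc : (g n).1 ∈ Ed ∧ arr (g n) ≠ none := ⟨inv1 n, hn⟩
      have := Classical.choose_spec (hext (g n) hc.1 hc.2)
      simp only [step, dif_pos hc]
      exact this.2.2
  have inv3 : ∀ n, arr (g n) ≠ none → (g (n + 1)).1 ≠ (g n).1 := by
    intro n hn
    rw [hgsucc]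
    have hc : (g n).1 ∈ Ed ∧ arr (g n) ≠ none := ⟨inv1 n, hn⟩
    have := Classical.choose_spec (hext (g n) hc.1 hc.2)
    simp only [step, dif_pos hc]
    exact this.2.1
  -- the vertex sequence
  let u : ℕ → Option V := fun n => dep (g n)
  -- pigeonhole : some vertex repeats
  have hrep : ∃ b, ∃ a, a < b ∧ u a = u b := by
    have hcard : Fintype.card (Option V) < Fintype.card (Fin (Fintype.card (Option V) + 1)) := by
      simp
    obtain ⟨x, y, hxy, he⟩ :=
      Fintype.exists_ne_map_eq_of_card_lt (fun n : Fin (Fintype.card (Option V) + 1) => u n) hcard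
    rcases lt_or_gt_of_ne (fun hcc : (x : ℕ) = y => hxy (Fin.ext hcc)) with hl | hl
    · exact ⟨y, x, hl, he⟩
    · exact ⟨x, y, hl, he.symm⟩
  let b := Nat.find hrep
  obtain ⟨a, hab, huab⟩ : ∃ a, a < b ∧ u a = u b := Nat.find_spec hrep
  have hmin : ∀ y, y < b → ∀ x, x < y → u x ≠ u y := by
    intro y hy x hxy hux
    exact Nat.find_min hrep hy ⟨x, hxy, hux⟩
  -- u is injective on [0, b)
  have hinj : ∀ x y, x < b → y < b → u x = u y → x = y := by
    intro x y hx hy hxy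
    rcases lt_trichotomy x y with h | h | h
    · exact absurd hxy (hmin y hy x h)
    · exact h
    · exact absurd hxy.symm (hmin x hx y h)
  -- edge distinctness on [a, b)
  have hedist : ∀ x y, x < y → y < b → (g x).1 ≠ (g y).1 := by
    intro x y hxy hyb heq
    rcases Nat.eq_or_lt_of_le (Nat.succ_le_of_lt hxy) with hcons | hlt
    · -- consecutive : y = x + 1
      subst hcons
      by_cases hn : arr (g x) = none
      · -- jumped back to start
        have hgy : g (x + 1) = s := inv_none x hn
        have hu0 : u 0 = dep s := by simp [u, hg0]
        have hdeps : dep s = none := by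
          rcases hs_safe with h1 | h1
          · exact h1
          · exfalso
            have he := inv1 x
            have hth := h1 (g x).1 he
            rcases hgx : (g x) with ⟨e, bb⟩
            rw [hgx] at hn hth
            cases bb
            · exact hth.1 (by simpa [arr] using hn)
            · exact hth.2 (by simpa [arr] using hn)
        have huy : u (x + 1) = none := by simp [u, hgy, hdeps]
        have hu0' : u 0 = none := by rw [hu0, hdeps]
        have : (0 : ℕ) = x + 1 := hinj 0 (x + 1) (Nat.lt_of_le_of_lt (Nat.zero_le _) hyb) hyb
          (by rw [hu0', huy])
        omega
      · exact inv3 x hn heq.symm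
    · -- non-consecutive
      -- endpoints of the darts with the same edge
      have hxset : (u x = t (g x).1 ∧ u (x + 1) = h (g x).1) ∨
          (u x = h (g x).1 ∧ u (x + 1) = t (g x).1) := by
        have h1 : u (x + 1) = arr (g x) := inv2 x
        rcases hgx : (g x) with ⟨e, bb⟩
        cases bb
        · right; constructor
          · simp [u, hgx, dep]
          · rw [h1, hgx]; simp [arr]
        · left; constructor
          · simp [u, hgx, dep]
          · rw [h1, hgx]; simp [arr]
      have hyval : u y = t (g y).1 ∨ u y = h (g y).1 := by
        rcases hgy : (g y) with ⟨e, bb⟩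
        cases bb
        · right; simp [u, hgy, dep]
        · left; simp [u, hgy, dep]
      rw [heq] at hxset
      have : u y = u x ∨ u y = u (x + 1) := by
        rcases hxset with ⟨h1, h2⟩ | ⟨h1, h2⟩ <;> rcases hyval with h3 | h3
        · left; rw [h3, h1]
        · right; rw [h3, h2]
        · right; rw [h3, h2]
        · left; rw [h3, h1]
      rcases this with h' | h'
      · have := hinj y x hyb (lt_trans hxy hyb) h'
        omega
      · by_cases hx1 : x + 1 < b
        · have := hinj y (x + 1) hyb hx1 h'
          omega
        · omega
  -- the circulation
  set k := b - a with hk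
  have hk1 : 1 ≤ k := by omega
  refine ⟨fun e => ∑ n ∈ Finset.range k,
      if (g (a + n)).1 = e then (if (g (a + n)).2 then 1 else -1) else 0, ?_, ?_, ?_⟩
  · -- support
    intro e hde
    by_contra hnot
    apply hde
    refine Finset.sum_eq_zero fun n _ => ?_
    have : (g (a + n)).1 ≠ e := fun hh => hnot (hh ▸ inv1 (a + n))
    simp [this]
  · -- nonzero
    refine ⟨(g a).1, ?_⟩
    show (∑ n ∈ Finset.range k,
      if (g (a + n)).1 = (g a).1 then (if (g (a + n)).2 then (1 : ℤ) else -1) else 0) ≠ 0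
    rw [Finset.sum_eq_single_of_mem 0 (Finset.mem_range.mpr hk1)]
    · cases hb : (g a).2 <;> simp [hb]
    · intro n hn hn0
      have hlt : a + n < b := by
        have := Finset.mem_range.mp hn; omega
      have : (g a).1 ≠ (g (a + n)).1 := hedist a (a + n) (by omega) hlt
      simp [Ne.symm this]
  · -- conservation
    intro v
    have hpush : ∀ (p : E → Option V),
        ∑ e ∈ Ed.filter (fun e => p e = some v), (∑ n ∈ Finset.range k,
          if (g (a + n)).1 = e then (if (g (a + n)).2 then (1 : ℤ) else -1) else 0)
        = ∑ n ∈ Finset.range k,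
            (if p (g (a + n)).1 = some v then (if (g (a + n)).2 then (1 : ℤ) else -1) else 0) := by
      intro p
      rw [Finset.sum_comm]
      refine Finset.sum_congr rfl fun n _ => ?_
      by_cases hmem : p (g (a + n)).1 = some v
      · rw [if_pos hmem]
        rw [Finset.sum_eq_single_of_mem (g (a + n)).1
          (Finset.mem_filter.mpr ⟨inv1 (a + n), hmem⟩)]
        · simp
        · intro e' _ hne'
          simp [Ne.symm hne']
      · rw [if_neg hmem]
        refine Finset.sum_eq_zero fun e' he' => ?_
        have : (g (a + n)).1 ≠ e' := by
          intro hh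
          exact hmem (hh ▸ (Finset.mem_filter.mp he').2)
        simp [this]
    rw [hpush t, hpush h]
    -- per-dart rewriting to arrival/departure indicators
    have hterm : ∀ n, ((if h (g (a + n)).1 = some v then (if (g (a + n)).2 then (1 : ℤ) else -1) else 0)
        - (if t (g (a + n)).1 = some v then (if (g (a + n)).2 then (1 : ℤ) else -1) else 0))
        = (if arr (g (a + n)) = some v then (1 : ℤ) else 0)
        - (if dep (g (a + n)) = some v then (1 : ℤ) else 0) := by
      intro n
      rcases hgn : (g (a + n)) with ⟨e, bb⟩
      cases bb <;> simp [arr, dep] <;> by_cases h1 : h e = some v <;>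
        by_cases h2 : t e = some v <;> simp [h1, h2]
    have key : ∑ n ∈ Finset.range k,
        ((if arr (g (a + n)) = some v then (1 : ℤ) else 0)
          - (if dep (g (a + n)) = some v then (1 : ℤ) else 0)) = 0 := by
      have harr : ∀ n, (if arr (g (a + n)) = some v then (1 : ℤ) else 0)
          = (if u (a + (n + 1)) = some v then (1 : ℤ) else 0) := by
        intro n
        have : u (a + n + 1) = arr (g (a + n)) := inv2 (a + n)
        rw [show a + (n + 1) = a + n + 1 by ring, this]
      have hdep : ∀ n, (if dep (g (a + n)) = some v then (1 : ℤ) else 0)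
          = (if u (a + n) = some v then (1 : ℤ) else 0) := fun n => rfl
      calc ∑ n ∈ Finset.range k,
          ((if arr (g (a + n)) = some v then (1 : ℤ) else 0)
            - (if dep (g (a + n)) = some v then (1 : ℤ) else 0))
          = ∑ n ∈ Finset.range k,
            ((fun m => if u (a + m) = some v then (1 : ℤ) else 0) (n + 1)
              - (fun m => if u (a + m) = some v then (1 : ℤ) else 0) n) := by
            refine Finset.sum_congr rfl fun n _ => ?_
            rw [harr n, hdep n]
        _ = (if u (a + k) = some v then (1 : ℤ) else 0)
            - (if u (a + 0) = some v then (1 : ℤ) else 0) := by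
            exact Finset.sum_range_sub (fun m => if u (a + m) = some v then (1 : ℤ) else 0) k
        _ = 0 := by
            have : a + k = b := by omega
            rw [this, Nat.add_zero, ← huab, sub_self]
    have := Finset.sum_sub_distrib (s := Finset.range k)
      (f := fun n => if h (g (a + n)).1 = some v then (if (g (a + n)).2 then (1 : ℤ) else -1) else 0)
      (g := fun n => if t (g (a + n)).1 = some v then (if (g (a + n)).2 then (1 : ℤ) else -1) else 0)
    rw [sub_eq_zero.symm, ← this]
    rw [Finset.sum_congr rfl fun n _ => hterm n]
    exact key


section Direction

variable {F : Type*} [Fintype F] [DecidableEq F]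

open Classical in
/-- Tail port of an edge: the conservation vertex governing its tail, if any. -/
def tport (M : Finset (F × F)) (Xt : F → F → ℝ) (e : F × F) : Option (F ⊕ (F ⊕ F)) :=
  if IsIntR (ZS M Xt e.1) then some (Sum.inl e.1)
  else if IsIntR (Bal M Xt e.1) then some (Sum.inr (Sum.inr e.1)) else none

open Classical in
/-- Head port of an edge. -/
def hport (M : Finset (F × F)) (Xt : F → F → ℝ) (e : F × F) : Option (F ⊕ (F ⊕ F)) :=
  if IsIntR (ZR M Xt e.2) then some (Sum.inr (Sum.inl e.2))
  else if IsIntR (Bal M Xt e.2) then some (Sum.inr (Sum.inr e.2)) else none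

lemma ZR_eq_ZS_add_Bal (M : Finset (F × F)) (Xt : F → F → ℝ) (i : F) :
    ZR M Xt i = ZS M Xt i + Bal M Xt i := by
  unfold Bal; ring

lemma tport_never_in (M : Finset (F × F)) (Xt : F → F → ℝ) (e : F × F) (i : F) :
    tport M Xt e ≠ some (Sum.inr (Sum.inl i)) := by
  unfold tport; split_ifs <;> simp

lemma hport_never_out (M : Finset (F × F)) (Xt : F → F → ℝ) (e : F × F) (i : F) :
    hport M Xt e ≠ some (Sum.inl i) := by
  unfold hport; split_ifs <;> simp

lemma tport_eq_out (M : Finset (F × F)) (Xt : F → F → ℝ) (e : F × F) (i : F) :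
    tport M Xt e = some (Sum.inl i) ↔ IsIntR (ZS M Xt e.1) ∧ e.1 = i := by
  unfold tport
  split_ifs with h1 h2 <;> simp_all

lemma tport_eq_bal (M : Finset (F × F)) (Xt : F → F → ℝ) (e : F × F) (i : F) :
    tport M Xt e = some (Sum.inr (Sum.inr i)) ↔
      ¬ IsIntR (ZS M Xt e.1) ∧ IsIntR (Bal M Xt e.1) ∧ e.1 = i := by
  unfold tport
  split_ifs with h1 h2 <;> simp_all

lemma hport_eq_in (M : Finset (F × F)) (Xt : F → F → ℝ) (e : F × F) (i : F) :
    hport M Xt e = some (Sum.inr (Sum.inl i)) ↔ IsIntR (ZR M Xt e.2) ∧ e.2 = i := by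
  unfold hport
  split_ifs with h1 h2 <;> simp_all

lemma hport_eq_bal (M : Finset (F × F)) (Xt : F → F → ℝ) (e : F × F) (i : F) :
    hport M Xt e = some (Sum.inr (Sum.inr i)) ↔
      ¬ IsIntR (ZR M Xt e.2) ∧ IsIntR (Bal M Xt e.2) ∧ e.2 = i := by
  unfold hport
  split_ifs with h1 h2 <;> simp_all

/-- Existence of an improving direction supported on the fractional edges. -/
lemma exists_direction (M : Finset (F × F)) (hloop : ∀ i : F, (i, i) ∉ M)
    (Xt : F → F → ℝ) (hfrac : ∃ m ∈ M, ¬ IsIntR (Xt m.1 m.2)) :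
    ∃ d : F → F → ℤ,
      (∀ i j, d i j ≠ 0 → (i, j) ∈ M ∧ ¬ IsIntR (Xt i j)) ∧
      (∃ i j, d i j ≠ 0) ∧
      (∀ i, IsIntR (ZS M Xt i) → (∑ j ∈ univ.filter (fun j => (i, j) ∈ M), d i j) = 0) ∧
      (∀ i, IsIntR (ZR M Xt i) → (∑ j ∈ univ.filter (fun j => (j, i) ∈ M), d j i) = 0) ∧
      (∀ i, IsIntR (Bal M Xt i) →
        (∑ j ∈ univ.filter (fun j => (j, i) ∈ M), d j i)
          = (∑ j ∈ univ.filter (fun j => (i, j) ∈ M), d i j)) := by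
  classical
  set Frac : Finset (F × F) := M.filter (fun m => ¬ IsIntR (Xt m.1 m.2)) with hFrac
  have hFracM : ∀ e ∈ Frac, e ∈ M := fun e he => (Finset.mem_filter.mp he).1
  have hFracf : ∀ e ∈ Frac, ¬ IsIntR (Xt e.1 e.2) := fun e he => (Finset.mem_filter.mp he).2
  have hmemFrac : ∀ e : F × F, e ∈ Frac ↔ e ∈ M ∧ ¬ IsIntR (Xt e.1 e.2) := fun e =>
    Finset.mem_filter
  have hne : Frac.Nonempty := by
    obtain ⟨m, hm, hf⟩ := hfrac
    exact ⟨m, (hmemFrac m).mpr ⟨hm, hf⟩⟩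
  -- degree condition
  have hdeg : ∀ v : F ⊕ (F ⊕ F), ∀ e ∈ Frac,
      (tport M Xt e = some v ∨ hport M Xt e = some v) →
      ∃ e' ∈ Frac, e' ≠ e ∧ (tport M Xt e' = some v ∨ hport M Xt e' = some v) := by
    intro v e he hor
    have heM := hFracM e he
    have hef := hFracf e he
    have heM' : (e.1, e.2) ∈ M := by simpa using heM
    rcases v with i | i | i
    · rcases hor with hcase | hcase
      · obtain ⟨hZS, hei⟩ := (tport_eq_out M Xt e i).mp hcase
        have hsum : IsIntR (∑ j ∈ univ.filter (fun j => (e.1, j) ∈ M), Xt e.1 j) := hZS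
        obtain ⟨j', hj', hjne, hjf⟩ := frac_partner hsum
          (Finset.mem_filter.mpr ⟨Finset.mem_univ e.2, heM'⟩) hef
        have hj'M : (e.1, j') ∈ M := (Finset.mem_filter.mp hj').2
        refine ⟨(e.1, j'), (hmemFrac _).mpr ⟨hj'M, hjf⟩, ?_, Or.inl ?_⟩
        · intro hh; exact hjne (congrArg Prod.snd hh)
        · exact (tport_eq_out M Xt (e.1, j') i).mpr ⟨hZS, hei⟩
      · exact absurd hcase (hport_never_out M Xt e i)
    · rcases hor with hcase | hcase
      · exact absurd hcase (tport_never_in M Xt e i)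
      · obtain ⟨hZR, hei⟩ := (hport_eq_in M Xt e i).mp hcase
        have hsum : IsIntR (∑ j ∈ univ.filter (fun j => (j, e.2) ∈ M), Xt j e.2) := hZR
        obtain ⟨j', hj', hjne, hjf⟩ := frac_partner hsum
          (Finset.mem_filter.mpr ⟨Finset.mem_univ e.1, heM'⟩) hef
        have hj'M : (j', e.2) ∈ M := (Finset.mem_filter.mp hj').2
        refine ⟨(j', e.2), (hmemFrac _).mpr ⟨hj'M, hjf⟩, ?_, Or.inr ?_⟩
        · intro hh; exact hjne (congrArg Prod.fst hh)
        · exact (hport_eq_in M Xt (j', e.2) i).mpr ⟨hZR, hei⟩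
    · rcases hor with hcase | hcase
      · obtain ⟨hnZS, hB, hei⟩ := (tport_eq_bal M Xt e i).mp hcase
        subst hei
        have hnZR : ¬ IsIntR (ZR M Xt e.1) := by
          intro hZR
          exact hnZS (by
            have := hZR.sub hB
            rwa [ZR_eq_ZS_add_Bal, add_sub_cancel_right] at this)
        obtain ⟨j', hj', hjf⟩ := frac_term (S := univ.filter (fun j => (j, e.1) ∈ M))
          (f := fun j => Xt j e.1) hnZR
        have hj'M : (j', e.1) ∈ M := (Finset.mem_filter.mp hj').2
        refine ⟨(j', e.1), (hmemFrac _).mpr ⟨hj'M, hjf⟩, ?_, Or.inr ?_⟩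
        · intro hh
          have h2 : e.2 = e.1 := (congrArg Prod.snd hh).symm
          have : (e.1, e.1) ∈ M := by
            have := heM'; rwa [h2] at this
          exact hloop e.1 this
        · exact (hport_eq_bal M Xt (j', e.1) e.1).mpr ⟨hnZR, hB, rfl⟩
      · obtain ⟨hnZR, hB, hei⟩ := (hport_eq_bal M Xt e i).mp hcase
        subst hei
        have hnZS : ¬ IsIntR (ZS M Xt e.2) := by
          intro hZS
          exact hnZR (by rw [ZR_eq_ZS_add_Bal]; exact hZS.add hB)
        obtain ⟨j', hj', hjf⟩ := frac_term (S := univ.filter (fun j => (e.2, j) ∈ M))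
          (f := fun j => Xt e.2 j) hnZS
        have hj'M : (e.2, j') ∈ M := (Finset.mem_filter.mp hj').2
        refine ⟨(e.2, j'), (hmemFrac _).mpr ⟨hj'M, hjf⟩, ?_, Or.inl ?_⟩
        · intro hh
          have h2 : e.1 = e.2 := (congrArg Prod.fst hh).symm
          have : (e.2, e.2) ∈ M := by
            have := heM'; rwa [h2] at this
          exact hloop e.2 this
        · exact (tport_eq_bal M Xt (e.2, j') e.2).mpr ⟨hnZS, hB, rfl⟩
  obtain ⟨d0, hsupp, ⟨e0, he0⟩, hcons⟩ :=
    exists_circulation Frac (tport M Xt) (hport M Xt) hdeg hne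
  -- rewriting sums over neighbours as sums over fractional edges
  have hzero : ∀ e : F × F, e ∉ Frac → d0 e = 0 := by
    intro e he
    by_contra hd0
    exact he (hsupp e hd0)
  have hout_sum : ∀ i, (∑ j ∈ univ.filter (fun j => (i, j) ∈ M), d0 (i, j))
      = ∑ e ∈ Frac.filter (fun e => e.1 = i), d0 e := by
    intro i
    have h1 : (∑ j ∈ univ.filter (fun j => (i, j) ∈ M), d0 (i, j))
        = ∑ j ∈ univ.filter (fun j => (i, j) ∈ Frac), d0 (i, j) := by
      refine (Finset.sum_subset ?_ ?_).symm
      · intro j hj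
        simp only [Finset.mem_filter] at hj ⊢
        exact ⟨hj.1, hFracM _ hj.2⟩
      · intro j hj hj2
        apply hzero
        simp only [Finset.mem_filter] at hj2
        intro hc
        exact hj2 ⟨Finset.mem_univ j, hc⟩
    rw [h1]
    refine Finset.sum_nbij' (i := fun j => (i, j)) (j := fun e => e.2) ?_ ?_ ?_ ?_ ?_
    · intro j hj
      simp only [Finset.mem_filter] at hj ⊢
      refine ⟨hj.2, by simp⟩
    · intro e he
      simp only [Finset.mem_filter] at he ⊢
      refine ⟨Finset.mem_univ _, ?_⟩
      have : (i, e.2) = e := by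
        rcases e with ⟨e1, e2⟩
        simp only at he ⊢
        rw [he.2]
      rw [this]
      exact he.1
    · intro j hj; rfl
    · intro e he
      simp only [Finset.mem_filter] at he
      rcases e with ⟨e1, e2⟩
      simp only at he ⊢
      rw [he.2]
    · intro j hj; rfl
  have hin_sum : ∀ i, (∑ j ∈ univ.filter (fun j => (j, i) ∈ M), d0 (j, i))
      = ∑ e ∈ Frac.filter (fun e => e.2 = i), d0 e := by
    intro i
    have h1 : (∑ j ∈ univ.filter (fun j => (j, i) ∈ M), d0 (j, i))
        = ∑ j ∈ univ.filter (fun j => (j, i) ∈ Frac), d0 (j, i) := by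
      refine (Finset.sum_subset ?_ ?_).symm
      · intro j hj
        simp only [Finset.mem_filter] at hj ⊢
        exact ⟨hj.1, hFracM _ hj.2⟩
      · intro j hj hj2
        apply hzero
        simp only [Finset.mem_filter] at hj2
        intro hc
        exact hj2 ⟨Finset.mem_univ j, hc⟩
    rw [h1]
    refine Finset.sum_nbij' (i := fun j => (j, i)) (j := fun e => e.1) ?_ ?_ ?_ ?_ ?_
    · intro j hj
      simp only [Finset.mem_filter] at hj ⊢
      refine ⟨hj.2, by simp⟩
    · intro e he
      simp only [Finset.mem_filter] at he ⊢
      refine ⟨Finset.mem_univ _, ?_⟩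
      have : (e.1, i) = e := by
        rcases e with ⟨e1, e2⟩
        simp only at he ⊢
        rw [he.2]
      rw [this]
      exact he.1
    · intro j hj; rfl
    · intro e he
      simp only [Finset.mem_filter] at he
      rcases e with ⟨e1, e2⟩
      simp only at he ⊢
      rw [he.2]
    · intro j hj; rfl
  -- the three conservation conclusions
  have hOUT : ∀ i, IsIntR (ZS M Xt i) →
      (∑ j ∈ univ.filter (fun j => (i, j) ∈ M), d0 (i, j)) = 0 := by
    intro i hO
    have hc := hcons (Sum.inl i)
    have hempty : Frac.filter (fun e => hport M Xt e = some (Sum.inl i)) = ∅ := by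
      refine Finset.filter_eq_empty_iff.mpr fun e _ => hport_never_out M Xt e i
    have hfe : Frac.filter (fun e => tport M Xt e = some (Sum.inl i))
        = Frac.filter (fun e => e.1 = i) := by
      refine Finset.filter_congr fun e he => ?_
      constructor
      · intro hh; exact ((tport_eq_out M Xt e i).mp hh).2
      · intro hh; exact (tport_eq_out M Xt e i).mpr ⟨hh ▸ hO, hh⟩
    rw [hempty, hfe] at hc
    rw [hout_sum i, ← hc, Finset.sum_empty]
  have hIN : ∀ i, IsIntR (ZR M Xt i) →
      (∑ j ∈ univ.filter (fun j => (j, i) ∈ M), d0 (j, i)) = 0 := by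
    intro i hI
    have hc := hcons (Sum.inr (Sum.inl i))
    have hempty : Frac.filter (fun e => tport M Xt e = some (Sum.inr (Sum.inl i))) = ∅ := by
      refine Finset.filter_eq_empty_iff.mpr fun e _ => tport_never_in M Xt e i
    have hfe : Frac.filter (fun e => hport M Xt e = some (Sum.inr (Sum.inl i)))
        = Frac.filter (fun e => e.2 = i) := by
      refine Finset.filter_congr fun e he => ?_
      constructor
      · intro hh; exact ((hport_eq_in M Xt e i).mp hh).2
      · intro hh; exact (hport_eq_in M Xt e i).mpr ⟨hh ▸ hI, hh⟩
    rw [hempty, hfe] at hc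
    rw [hin_sum i, hc, Finset.sum_empty]
  refine ⟨fun i j => d0 (i, j), ?_, ⟨e0.1, e0.2, by simpa using he0⟩, hOUT, hIN, ?_⟩
  · intro i j hd
    exact (hmemFrac (i, j)).mp (hsupp (i, j) hd)
  · intro i hB
    by_cases hO : IsIntR (ZS M Xt i)
    · have hI : IsIntR (ZR M Xt i) := by
        rw [ZR_eq_ZS_add_Bal]; exact hO.add hB
      rw [hOUT i hO, hIN i hI]
    · have hI : ¬ IsIntR (ZR M Xt i) := by
        intro hI
        exact hO (by
          have := hI.sub hB
          rwa [ZR_eq_ZS_add_Bal, add_sub_cancel_right] at this)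
      have hc := hcons (Sum.inr (Sum.inr i))
      have hfe1 : Frac.filter (fun e => hport M Xt e = some (Sum.inr (Sum.inr i)))
          = Frac.filter (fun e => e.2 = i) := by
        refine Finset.filter_congr fun e he => ?_
        constructor
        · intro hh; exact ((hport_eq_bal M Xt e i).mp hh).2.2
        · intro hh; exact (hport_eq_bal M Xt e i).mpr ⟨hh ▸ hI, hh ▸ hB, hh⟩
      have hfe2 : Frac.filter (fun e => tport M Xt e = some (Sum.inr (Sum.inr i)))
          = Frac.filter (fun e => e.1 = i) := by
        refine Finset.filter_congr fun e he => ?_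
        constructor
        · intro hh; exact ((tport_eq_bal M Xt e i).mp hh).2.2
        · intro hh
          refine (tport_eq_bal M Xt e i).mpr ⟨hh ▸ ?_, hh ▸ hB, hh⟩
          intro hZS
          exact hO (hh ▸ hZS)
      rw [hfe1, hfe2] at hc
      rw [hin_sum i, hout_sum i, hc]

end Direction

section Step

/-- Room to move: how far a fractional quantity `q` moving at integer rate `r` can go
before hitting the next integer. -/
noncomputable def room (q : ℝ) (r : ℤ) : ℝ :=
  if 0 < r then ((⌈q⌉ : ℝ) - q) / (r : ℝ) else (q - (⌊q⌋ : ℝ)) / (-(r : ℝ))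

lemma room_pos {q : ℝ} {r : ℤ} (hq : ¬ IsIntR q) (hr : r ≠ 0) : 0 < room q r := by
  unfold room
  split_ifs with h
  · have : (0 : ℝ) < (r : ℝ) := by exact_mod_cast h
    exact div_pos (by linarith [IsIntR.lt_ceil hq]) this
  · have hneg : r < 0 := lt_of_le_of_ne (not_lt.mp h) hr
    have : (0 : ℝ) < -(r : ℝ) := by
      have : (r : ℝ) < 0 := by exact_mod_cast hneg
      linarith
    exact div_pos (by linarith [IsIntR.floor_lt hq]) this

lemma move_bound {q : ℝ} {r : ℤ} {ε : ℝ} (hq : ¬ IsIntR q) (hr : r ≠ 0)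
    (hε0 : 0 < ε) (hεr : ε ≤ room q r) :
    (⌊q⌋ : ℝ) ≤ q + ε * r ∧ q + ε * r ≤ (⌈q⌉ : ℝ) := by
  unfold room at hεr
  split_ifs at hεr with h
  · have hr' : (0 : ℝ) < (r : ℝ) := by exact_mod_cast h
    have h1 : ε * r ≤ (⌈q⌉ : ℝ) - q := (le_div_iff₀ hr').mp hεr
    have h2 : 0 < ε * r := mul_pos hε0 hr'
    constructor
    · linarith [IsIntR.floor_lt hq]
    · linarith
  · have hneg : r < 0 := lt_of_le_of_ne (not_lt.mp h) hr
    have hr' : (0 : ℝ) < -(r : ℝ) := by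
      have : (r : ℝ) < 0 := by exact_mod_cast hneg
      linarith
    have h1 : ε * -(r : ℝ) ≤ q - (⌊q⌋ : ℝ) := (le_div_iff₀ hr').mp hεr
    have h2 : 0 < ε * -(r : ℝ) := mul_pos hε0 hr'
    constructor
    · linarith
    · nlinarith [IsIntR.lt_ceil hq]

lemma move_int {q : ℝ} {r : ℤ} (hr : r ≠ 0) : IsIntR (q + room q r * r) := by
  unfold room
  split_ifs with h
  · have hr' : (r : ℝ) ≠ 0 := by exact_mod_cast h.ne'
    refine ⟨⌈q⌉, ?_⟩
    rw [div_mul_cancel₀ _ hr']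
    ring
  · have hr' : -(r : ℝ) ≠ 0 := by
      have : (r : ℝ) ≠ 0 := by exact_mod_cast hr
      simpa using this
    refine ⟨⌊q⌋, ?_⟩
    have : (q - (⌊q⌋ : ℝ)) / -(r : ℝ) * (r : ℝ)
        = -((q - (⌊q⌋ : ℝ)) / -(r : ℝ) * (-(r : ℝ))) := by ring
    rw [this, div_mul_cancel₀ _ hr']
    ring

lemma bound_transfer {base q q' : ℝ} (hl : (⌊base⌋ : ℝ) ≤ q) (hu : q ≤ (⌈base⌉ : ℝ))
    (hl' : (⌊q⌋ : ℝ) ≤ q') (hu' : q' ≤ (⌈q⌉ : ℝ)) :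
    (⌊base⌋ : ℝ) ≤ q' ∧ q' ≤ (⌈base⌉ : ℝ) := by
  have h1 : ⌊base⌋ ≤ ⌊q⌋ := Int.le_floor.mpr hl
  have h2 : ⌈q⌉ ≤ ⌈base⌉ := Int.ceil_le.mpr hu
  have h1' : (⌊base⌋ : ℝ) ≤ (⌊q⌋ : ℝ) := by exact_mod_cast h1
  have h2' : ((⌈q⌉ : ℤ) : ℝ) ≤ (⌈base⌉ : ℝ) := by exact_mod_cast h2
  exact ⟨le_trans h1' hl', le_trans hu' h2'⟩

lemma quantity_step {base q : ℝ} {r : ℤ} {ε : ℝ}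
    (hbl : (⌊base⌋ : ℝ) ≤ q) (hbu : q ≤ (⌈base⌉ : ℝ)) (hε0 : 0 < ε)
    (h : r = 0 ∨ (¬ IsIntR q ∧ r ≠ 0 ∧ ε ≤ room q r)) :
    (⌊base⌋ : ℝ) ≤ q + ε * r ∧ q + ε * r ≤ (⌈base⌉ : ℝ) := by
  rcases h with h | ⟨hq, hr, hεr⟩
  · subst h; simp only [Int.cast_zero, mul_zero, add_zero]; exact ⟨hbl, hbu⟩
  · obtain ⟨h1, h2⟩ := move_bound hq hr hε0 hεr
    exact bound_transfer hbl hbu h1 h2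

variable {F : Type*} [Fintype F] [DecidableEq F]

open Classical in
/-- Total number of fractional quantities of a point. -/
noncomputable def fracMeasure (M : Finset (F × F)) (Xt : F → F → ℝ) : ℕ :=
  (M.filter (fun m => ¬ IsIntR (Xt m.1 m.2))).card
  + (univ.filter (fun i : F => ¬ IsIntR (ZS M Xt i))).card
  + (univ.filter (fun i : F => ¬ IsIntR (ZR M Xt i))).card
  + (univ.filter (fun i : F => ¬ IsIntR (Bal M Xt i))).card

lemma fracMeasure_lt (M : Finset (F × F)) {Xt Xt' : F → F → ℝ}
    (h1 : ∀ m ∈ M, ¬ IsIntR (Xt' m.1 m.2) → ¬ IsIntR (Xt m.1 m.2))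
    (h2 : ∀ i, ¬ IsIntR (ZS M Xt' i) → ¬ IsIntR (ZS M Xt i))
    (h3 : ∀ i, ¬ IsIntR (ZR M Xt' i) → ¬ IsIntR (ZR M Xt i))
    (h4 : ∀ i, ¬ IsIntR (Bal M Xt' i) → ¬ IsIntR (Bal M Xt i))
    (hstrict : (∃ m ∈ M, ¬ IsIntR (Xt m.1 m.2) ∧ IsIntR (Xt' m.1 m.2))
      ∨ (∃ i, ¬ IsIntR (ZS M Xt i) ∧ IsIntR (ZS M Xt' i))
      ∨ (∃ i, ¬ IsIntR (ZR M Xt i) ∧ IsIntR (ZR M Xt' i))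
      ∨ (∃ i, ¬ IsIntR (Bal M Xt i) ∧ IsIntR (Bal M Xt' i))) :
    fracMeasure M Xt' < fracMeasure M Xt := by
  classical
  unfold fracMeasure
  have hsub1 : M.filter (fun m => ¬ IsIntR (Xt' m.1 m.2))
      ⊆ M.filter (fun m => ¬ IsIntR (Xt m.1 m.2)) := by
    intro x hx
    simp only [Finset.mem_filter] at hx ⊢
    exact ⟨hx.1, h1 x hx.1 hx.2⟩
  have hsub2 : univ.filter (fun i : F => ¬ IsIntR (ZS M Xt' i))
      ⊆ univ.filter (fun i : F => ¬ IsIntR (ZS M Xt i)) := by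
    intro x hx
    simp only [Finset.mem_filter] at hx ⊢
    exact ⟨hx.1, h2 x hx.2⟩
  have hsub3 : univ.filter (fun i : F => ¬ IsIntR (ZR M Xt' i))
      ⊆ univ.filter (fun i : F => ¬ IsIntR (ZR M Xt i)) := by
    intro x hx
    simp only [Finset.mem_filter] at hx ⊢
    exact ⟨hx.1, h3 x hx.2⟩
  have hsub4 : univ.filter (fun i : F => ¬ IsIntR (Bal M Xt' i))
      ⊆ univ.filter (fun i : F => ¬ IsIntR (Bal M Xt i)) := by
    intro x hx
    simp only [Finset.mem_filter] at hx ⊢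
    exact ⟨hx.1, h4 x hx.2⟩
  have hc1 := Finset.card_le_card hsub1
  have hc2 := Finset.card_le_card hsub2
  have hc3 := Finset.card_le_card hsub3
  have hc4 := Finset.card_le_card hsub4
  rcases hstrict with ⟨m, hm, hf, hi⟩ | ⟨i, hf, hi⟩ | ⟨i, hf, hi⟩ | ⟨i, hf, hi⟩
  · have : M.filter (fun m => ¬ IsIntR (Xt' m.1 m.2))
        ⊂ M.filter (fun m => ¬ IsIntR (Xt m.1 m.2)) := by
      refine (Finset.ssubset_iff_of_subset hsub1).mpr ⟨m, ?_, ?_⟩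
      · simp only [Finset.mem_filter]; exact ⟨hm, hf⟩
      · simp only [Finset.mem_filter]; intro hcon; exact hcon.2 hi
    have := Finset.card_lt_card this
    omega
  · have : univ.filter (fun i : F => ¬ IsIntR (ZS M Xt' i))
        ⊂ univ.filter (fun i : F => ¬ IsIntR (ZS M Xt i)) := by
      refine (Finset.ssubset_iff_of_subset hsub2).mpr ⟨i, ?_, ?_⟩
      · simp only [Finset.mem_filter]; exact ⟨Finset.mem_univ _, hf⟩
      · simp only [Finset.mem_filter]; intro hcon; exact hcon.2 hi
    have := Finset.card_lt_card this
    omega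
  · have : univ.filter (fun i : F => ¬ IsIntR (ZR M Xt' i))
        ⊂ univ.filter (fun i : F => ¬ IsIntR (ZR M Xt i)) := by
      refine (Finset.ssubset_iff_of_subset hsub3).mpr ⟨i, ?_, ?_⟩
      · simp only [Finset.mem_filter]; exact ⟨Finset.mem_univ _, hf⟩
      · simp only [Finset.mem_filter]; intro hcon; exact hcon.2 hi
    have := Finset.card_lt_card this
    omega
  · have : univ.filter (fun i : F => ¬ IsIntR (Bal M Xt' i))
        ⊂ univ.filter (fun i : F => ¬ IsIntR (Bal M Xt i)) := by
      refine (Finset.ssubset_iff_of_subset hsub4).mpr ⟨i, ?_, ?_⟩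
      · simp only [Finset.mem_filter]; exact ⟨Finset.mem_univ _, hf⟩
      · simp only [Finset.mem_filter]; intro hcon; exact hcon.2 hi
    have := Finset.card_lt_card this
    omega

lemma step_lemma (M : Finset (F × F)) (hloop : ∀ i : F, (i, i) ∉ M)
    (XRel : F → F → ℝ) (c : F → F → ℝ)
    (Xt : F → F → ℝ) (hXt : RealFeasibleRounding M XRel Xt)
    (hfrac : ∃ m ∈ M, ¬ IsIntR (Xt m.1 m.2)) :
    ∃ Xt' : F → F → ℝ, RealFeasibleRounding M XRel Xt' ∧
      (∑ m ∈ M, c m.1 m.2 * Xt' m.1 m.2) ≤ (∑ m ∈ M, c m.1 m.2 * Xt m.1 m.2) ∧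
      fracMeasure M Xt' < fracMeasure M Xt := by
  classical
  suffices H : ∀ d : F → F → ℤ,
      (∀ i j, d i j ≠ 0 → (i, j) ∈ M ∧ ¬ IsIntR (Xt i j)) →
      (∃ i j, d i j ≠ 0) →
      (∀ i, IsIntR (ZS M Xt i) → (∑ j ∈ univ.filter (fun j => (i, j) ∈ M), d i j) = 0) →
      (∀ i, IsIntR (ZR M Xt i) → (∑ j ∈ univ.filter (fun j => (j, i) ∈ M), d j i) = 0) →
      (∀ i, IsIntR (Bal M Xt i) →
        (∑ j ∈ univ.filter (fun j => (j, i) ∈ M), d j i)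
          = (∑ j ∈ univ.filter (fun j => (i, j) ∈ M), d i j)) →
      (∑ m ∈ M, c m.1 m.2 * (d m.1 m.2 : ℝ)) ≤ 0 →
      ∃ Xt' : F → F → ℝ, RealFeasibleRounding M XRel Xt' ∧
        (∑ m ∈ M, c m.1 m.2 * Xt' m.1 m.2) ≤ (∑ m ∈ M, c m.1 m.2 * Xt m.1 m.2) ∧
        fracMeasure M Xt' < fracMeasure M Xt by
    obtain ⟨d, hsupp, hnz, hO, hI, hB⟩ := exists_direction M hloop Xt hfrac
    rcases le_or_gt (∑ m ∈ M, c m.1 m.2 * (d m.1 m.2 : ℝ)) 0 with hc | hc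
    · exact H d hsupp hnz hO hI hB hc
    · refine H (fun i j => -(d i j)) (fun i j hd => hsupp i j (by simpa using hd))
        (by obtain ⟨i, j, hd⟩ := hnz; exact ⟨i, j, by simpa using hd⟩) ?_ ?_ ?_ ?_
      · intro i hi
        simp only [Finset.sum_neg_distrib]
        rw [hO i hi]; ring
      · intro i hi
        simp only [Finset.sum_neg_distrib]
        rw [hI i hi]; ring
      · intro i hi
        simp only [Finset.sum_neg_distrib]
        rw [hB i hi]
      · have : (∑ m ∈ M, c m.1 m.2 * ((-(d m.1 m.2) : ℤ) : ℝ))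
            = -(∑ m ∈ M, c m.1 m.2 * (d m.1 m.2 : ℝ)) := by
          rw [← Finset.sum_neg_distrib]
          refine Finset.sum_congr rfl fun m _ => ?_
          push_cast; ring
        rw [this]
        linarith
  intro d hsupp hnz hO hI hB hcost
  -- rates
  set rOut : F → ℤ := fun i => ∑ j ∈ univ.filter (fun j => (i, j) ∈ M), d i j with hrOut
  set rIn : F → ℤ := fun i => ∑ j ∈ univ.filter (fun j => (j, i) ∈ M), d j i with hrIn
  -- fractionality from nonzero rates
  have hfr_coord : ∀ i j, d i j ≠ 0 → ¬ IsIntR (Xt i j) := fun i j hd => (hsupp i j hd).2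
  have hfr_out : ∀ i, rOut i ≠ 0 → ¬ IsIntR (ZS M Xt i) := by
    intro i hr hint; exact hr (hO i hint)
  have hfr_in : ∀ i, rIn i ≠ 0 → ¬ IsIntR (ZR M Xt i) := by
    intro i hr hint; exact hr (hI i hint)
  have hfr_bal : ∀ i, rIn i - rOut i ≠ 0 → ¬ IsIntR (Bal M Xt i) := by
    intro i hr hint
    have h2 : rIn i = rOut i := hB i hint
    omega
  -- the finite set of rooms
  set R : Finset ℝ :=
    ((M.filter (fun m => d m.1 m.2 ≠ 0)).image (fun m => room (Xt m.1 m.2) (d m.1 m.2)))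
    ∪ ((univ.filter (fun i => rOut i ≠ 0)).image (fun i => room (ZS M Xt i) (rOut i)))
    ∪ ((univ.filter (fun i => rIn i ≠ 0)).image (fun i => room (ZR M Xt i) (rIn i)))
    ∪ ((univ.filter (fun i => rIn i - rOut i ≠ 0)).image
        (fun i => room (Bal M Xt i) (rIn i - rOut i))) with hR
  have hRne : R.Nonempty := by
    obtain ⟨i, j, hd⟩ := hnz
    refine ⟨room (Xt i j) (d i j), ?_⟩
    rw [hR]
    simp only [Finset.mem_union, Finset.mem_image, Finset.mem_filter]
    exact Or.inl (Or.inl (Or.inl ⟨(i, j), ⟨(hsupp i j hd).1, hd⟩, rfl⟩))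
  set ε : ℝ := R.min' hRne with hε
  have hεpos : 0 < ε := by
    rw [hε]
    have hmem := R.min'_mem hRne
    have : ∀ x ∈ R, 0 < x := by
      intro x hx
      rw [hR] at hx
      simp only [Finset.mem_union, Finset.mem_image, Finset.mem_filter] at hx
      rcases hx with ((⟨m, ⟨hm, hd⟩, rfl⟩ | ⟨i, ⟨-, hr⟩, rfl⟩) | ⟨i, ⟨-, hr⟩, rfl⟩)
        | ⟨i, ⟨-, hr⟩, rfl⟩
      · exact room_pos (hfr_coord m.1 m.2 hd) hd
      · exact room_pos (hfr_out i hr) hr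
      · exact room_pos (hfr_in i hr) hr
      · exact room_pos (hfr_bal i hr) hr
    exact this _ (R.min'_mem hRne)
  have hεle : ∀ x ∈ R, ε ≤ x := fun x hx => R.min'_le x hx
  -- the new point
  set Xt' : F → F → ℝ := fun i j => Xt i j + ε * (d i j : ℝ) with hXt'
  -- linearity of the quantities
  have hZS' : ∀ i, ZS M Xt' i = ZS M Xt i + ε * ((rOut i : ℤ) : ℝ) := by
    intro i
    unfold ZS
    rw [hXt', hrOut]
    push_cast
    rw [Finset.sum_add_distrib, ← Finset.mul_sum]
  have hZR' : ∀ i, ZR M Xt' i = ZR M Xt i + ε * ((rIn i : ℤ) : ℝ) := by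
    intro i
    unfold ZR
    rw [hXt', hrIn]
    push_cast
    rw [Finset.sum_add_distrib, ← Finset.mul_sum]
  have hBal' : ∀ i, Bal M Xt' i = Bal M Xt i + ε * (((rIn i - rOut i : ℤ)) : ℝ) := by
    intro i
    unfold Bal
    rw [hZS' i, hZR' i]
    push_cast
    ring
  obtain ⟨hc1, hc2, hc3, hc4⟩ := hXt
  -- feasibility of the new point
  have hfeas : RealFeasibleRounding M XRel Xt' := by
    refine ⟨?_, ?_, ?_, ?_⟩
    · intro m hm
      rw [hXt']
      refine quantity_step (hc1 m hm).1 (hc1 m hm).2 hεpos ?_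
      by_cases hd : d m.1 m.2 = 0
      · exact Or.inl hd
      · refine Or.inr ⟨hfr_coord m.1 m.2 hd, hd, hεle _ ?_⟩
        rw [hR]
        simp only [Finset.mem_union, Finset.mem_image, Finset.mem_filter]
        exact Or.inl (Or.inl (Or.inl ⟨m, ⟨hm, hd⟩, by rcases m with ⟨m1, m2⟩; rfl⟩))
    · intro i
      have hq := hc2 i
      have hnew : (∑ j ∈ univ.filter (fun j => (i, j) ∈ M), Xt' i j)
          = (∑ j ∈ univ.filter (fun j => (i, j) ∈ M), Xt i j) + ε * ((rOut i : ℤ) : ℝ) :=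
        hZS' i
      rw [hnew]
      refine quantity_step hq.1 hq.2 hεpos ?_
      by_cases hr : rOut i = 0
      · exact Or.inl hr
      · refine Or.inr ⟨hfr_out i hr, hr, hεle _ ?_⟩
        rw [hR]
        simp only [Finset.mem_union, Finset.mem_image, Finset.mem_filter]
        exact Or.inl (Or.inl (Or.inr ⟨i, ⟨Finset.mem_univ i, hr⟩, rfl⟩))
    · intro i
      have hq := hc3 i
      have hnew : (∑ j ∈ univ.filter (fun j => (j, i) ∈ M), Xt' j i)
          = (∑ j ∈ univ.filter (fun j => (j, i) ∈ M), Xt j i) + ε * ((rIn i : ℤ) : ℝ) :=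
        hZR' i
      rw [hnew]
      refine quantity_step hq.1 hq.2 hεpos ?_
      by_cases hr : rIn i = 0
      · exact Or.inl hr
      · refine Or.inr ⟨hfr_in i hr, hr, hεle _ ?_⟩
        rw [hR]
        simp only [Finset.mem_union, Finset.mem_image, Finset.mem_filter]
        exact Or.inl (Or.inr ⟨i, ⟨Finset.mem_univ i, hr⟩, rfl⟩)
    · intro i
      have hq := hc4 i
      have hnew : (∑ j ∈ univ.filter (fun j => (j, i) ∈ M), Xt' j i)
            - (∑ j ∈ univ.filter (fun j => (i, j) ∈ M), Xt' i j)
          = ((∑ j ∈ univ.filter (fun j => (j, i) ∈ M), Xt j i)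
            - (∑ j ∈ univ.filter (fun j => (i, j) ∈ M), Xt i j))
            + ε * (((rIn i - rOut i : ℤ)) : ℝ) := hBal' i
      rw [hnew]
      refine quantity_step hq.1 hq.2 hεpos ?_
      by_cases hr : rIn i - rOut i = 0
      · exact Or.inl hr
      · refine Or.inr ⟨hfr_bal i hr, hr, hεle _ ?_⟩
        rw [hR]
        simp only [Finset.mem_union, Finset.mem_image, Finset.mem_filter]
        exact Or.inr ⟨i, ⟨Finset.mem_univ i, hr⟩, rfl⟩
  -- cost comparison
  have hcost' : (∑ m ∈ M, c m.1 m.2 * Xt' m.1 m.2)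
      = (∑ m ∈ M, c m.1 m.2 * Xt m.1 m.2) + ε * (∑ m ∈ M, c m.1 m.2 * (d m.1 m.2 : ℝ)) := by
    rw [hXt', Finset.mul_sum, ← Finset.sum_add_distrib]
    refine Finset.sum_congr rfl fun m _ => ?_
    ring
  -- measure decrease
  have hmeas : fracMeasure M Xt' < fracMeasure M Xt := by
    refine fracMeasure_lt M ?_ ?_ ?_ ?_ ?_
    · intro m hm hf'
      intro hint
      apply hf'
      have hd : d m.1 m.2 = 0 := by
        by_contra hd
        exact hfr_coord m.1 m.2 hd hint
      show IsIntR (Xt m.1 m.2 + ε * (d m.1 m.2 : ℝ))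
      rw [hd]
      simpa using hint
    · intro i hf' hint
      apply hf'
      have hr : rOut i = 0 := hO i hint
      rw [hZS' i, hr]
      simpa using hint
    · intro i hf' hint
      apply hf'
      have hr : rIn i = 0 := hI i hint
      rw [hZR' i, hr]
      simpa using hint
    · intro i hf' hint
      apply hf'
      have hr : rIn i - rOut i = 0 := by
        have h2 : rIn i = rOut i := hB i hint
        omega
      rw [hBal' i, hr]
      simpa using hint
    · -- the minimizer becomes integral
      have hεR : ε ∈ R := R.min'_mem hRne
      rw [hR] at hεR
      simp only [Finset.mem_union, Finset.mem_image, Finset.mem_filter] at hεR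
      rcases hεR with ((⟨m, ⟨hm, hd⟩, hroom⟩ | ⟨i, ⟨-, hr⟩, hroom⟩) | ⟨i, ⟨-, hr⟩, hroom⟩)
        | ⟨i, ⟨-, hr⟩, hroom⟩
      · refine Or.inl ⟨m, hm, hfr_coord m.1 m.2 hd, ?_⟩
        have hmove := move_int (q := Xt m.1 m.2) hd
        rw [hroom] at hmove
        exact hmove
      · refine Or.inr (Or.inl ⟨i, hfr_out i hr, ?_⟩)
        rw [hZS' i]
        have hmove := move_int (q := ZS M Xt i) hr
        rw [hroom] at hmove
        exact hmove
      · refine Or.inr (Or.inr (Or.inl ⟨i, hfr_in i hr, ?_⟩))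
        rw [hZR' i]
        have hmove := move_int (q := ZR M Xt i) hr
        rw [hroom] at hmove
        exact hmove
      · refine Or.inr (Or.inr (Or.inr ⟨i, hfr_bal i hr, ?_⟩))
        rw [hBal' i]
        have hmove := move_int (q := Bal M Xt i) hr
        rw [hroom] at hmove
        exact hmove
  refine ⟨Xt', hfeas, ?_, hmeas⟩
  rw [hcost']
  nlinarith [hεpos, hcost]

end Step

variable {F : Type*} [Fintype F] [DecidableEq F]

lemma integral_case (M : Finset (F × F)) (XRel Xt : F → F → ℝ)
    (hXt : RealFeasibleRounding M XRel Xt)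
    (hint : ∀ m ∈ M, IsIntR (Xt m.1 m.2)) :
    ∃ X : F → F → ℤ, FeasibleRounding M XRel X ∧
      ∀ m ∈ M, ((X m.1 m.2 : ℤ) : ℝ) = Xt m.1 m.2 := by
  classical
  have heq : ∀ m ∈ M, ((⌊Xt m.1 m.2⌋ : ℤ) : ℝ) = Xt m.1 m.2 := by
    intro m hm
    obtain ⟨n, hn⟩ := hint m hm
    rw [← hn]
    simp
  have hsumout : ∀ i : F, ((∑ j ∈ univ.filter (fun j => (i, j) ∈ M), ⌊Xt i j⌋ : ℤ) : ℝ)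
      = ∑ j ∈ univ.filter (fun j => (i, j) ∈ M), Xt i j := by
    intro i
    push_cast
    refine Finset.sum_congr rfl fun j hj => ?_
    exact heq (i, j) (Finset.mem_filter.mp hj).2
  have hsumin : ∀ i : F, ((∑ j ∈ univ.filter (fun j => (j, i) ∈ M), ⌊Xt j i⌋ : ℤ) : ℝ)
      = ∑ j ∈ univ.filter (fun j => (j, i) ∈ M), Xt j i := by
    intro i
    push_cast
    refine Finset.sum_congr rfl fun j hj => ?_
    exact heq (j, i) (Finset.mem_filter.mp hj).2
  obtain ⟨hc1, hc2, hc3, hc4⟩ := hXt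
  refine ⟨fun i j => ⌊Xt i j⌋, ⟨?_, ?_, ?_, ?_⟩, heq⟩
  · intro m hm
    obtain ⟨hl, hu⟩ := hc1 m hm
    rw [← heq m hm] at hl hu
    exact ⟨by exact_mod_cast hl, by exact_mod_cast hu⟩
  · intro i
    obtain ⟨hl, hu⟩ := hc2 i
    rw [← hsumout i] at hl hu
    exact ⟨by exact_mod_cast hl, by exact_mod_cast hu⟩
  · intro i
    obtain ⟨hl, hu⟩ := hc3 i
    rw [← hsumin i] at hl hu
    exact ⟨by exact_mod_cast hl, by exact_mod_cast hu⟩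
  · intro i
    obtain ⟨hl, hu⟩ := hc4 i
    rw [← hsumin i, ← hsumout i] at hl hu
    constructor
    · exact_mod_cast hl
    · exact_mod_cast hu

lemma round_aux (M : Finset (F × F)) (hloop : ∀ i : F, (i, i) ∉ M)
    (XRel : F → F → ℝ) (c : F → F → ℝ) :
    ∀ N : ℕ, ∀ Xt : F → F → ℝ, fracMeasure M Xt ≤ N → RealFeasibleRounding M XRel Xt →
    ∃ X : F → F → ℤ, FeasibleRounding M XRel X ∧
      (∑ m ∈ M, c m.1 m.2 * ((X m.1 m.2 : ℤ) : ℝ)) ≤ ∑ m ∈ M, c m.1 m.2 * Xt m.1 m.2 := by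
  classical
  intro N
  induction N with
  | zero =>
    intro Xt hN hfeas
    have hint : ∀ m ∈ M, IsIntR (Xt m.1 m.2) := by
      by_contra hcon
      push_neg at hcon
      obtain ⟨m, hm, hf⟩ := hcon
      have hmem : m ∈ M.filter (fun m => ¬ IsIntR (Xt m.1 m.2)) :=
        Finset.mem_filter.mpr ⟨hm, hf⟩
      have hpos : 0 < (M.filter (fun m => ¬ IsIntR (Xt m.1 m.2))).card :=
        Finset.card_pos.mpr ⟨m, hmem⟩
      have : 0 < fracMeasure M Xt := by
        unfold fracMeasure
        omega
      omega
    obtain ⟨X, hX, heq⟩ := integral_case M XRel Xt hfeas hint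
    refine ⟨X, hX, le_of_eq (Finset.sum_congr rfl fun m hm => ?_)⟩
    rw [heq m hm]
  | succ n ih =>
    intro Xt hN hfeas
    by_cases hfr : ∃ m ∈ M, ¬ IsIntR (Xt m.1 m.2)
    · obtain ⟨Xt', hfeas', hcost', hmeas'⟩ := step_lemma M hloop XRel c Xt hfeas hfr
      obtain ⟨X, hX, hc⟩ := ih Xt' (by omega) hfeas'
      exact ⟨X, hX, le_trans hc hcost'⟩
    · push_neg at hfr
      obtain ⟨X, hX, heq⟩ := integral_case M XRel Xt hfeas hfr
      refine ⟨X, hX, le_of_eq (Finset.sum_congr rfl fun m hm => ?_)⟩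
      rw [heq m hm]

/-- Integrality of the rounding problem: every real-feasible point of the rounding
polytope is weakly dominated (for any cost vector) by an integer feasible rounding. -/
theorem rounding_integrality
    (M : Finset (F × F)) (hloop : ∀ i : F, (i, i) ∉ M)
    (XRel : F → F → ℝ) (hXRel : ∀ m ∈ M, 0 ≤ XRel m.1 m.2)
    (c : F → F → ℝ)
    (Xt : F → F → ℝ) (hXt : RealFeasibleRounding M XRel Xt) :
    ∃ X : F → F → ℤ, FeasibleRounding M XRel X ∧
      (∑ m ∈ M, c m.1 m.2 * ((X m.1 m.2 : ℤ) : ℝ)) ≤ ∑ m ∈ M, c m.1 m.2 * Xt m.1 m.2 := by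
  exact round_aux M hloop XRel c (fracMeasure M Xt) Xt le_rfl hXt

end
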